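/- Let c_H > 0, R_H > 0, β > 0 and ε ∈ {1, −1}; set p = β + (c_H² + ε·R_H²)/2 and q = β + (−c_H² + ε·R_H²)/2, and assume q > 0. Then the image under the complex square map z ↦ z² of the Hooke envelope conic E_{Hε} = {z ∈ ℂ : (Re z)²/p + (Im z)²/q = 1} equals the Kepler envelope conic {w ∈ ℂ : |w| + |w − c_H²| = 2β + ε·R_H²}, which is confocal with the Kepler boundary (foci 0 and (c_H², 0)) and has semi-major axis β + ε·R_H²/2. (With β = E/k, this identifies the envelope curves E_{H±} of the Hooke billiard flight ellipses, x²/(½(c_H² ± R_H²) + E/k) + y²/(½(−c_H² ± R_H²) + E/k) = 1, as the duals of the Kepler envelopes E_±.) -/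

import Mathlib

/-- **Duality of the envelope conics of the Hooke and Kepler billiards.**
Let `c_H, R_H, β > 0`, `ε = ±1`, `p = β + (c_H² + εR_H²)/2`, `q = β + (−c_H² + εR_H²)/2`
with `q > 0`.  Then the image under `z ↦ z²` of the Hooke envelope conic
`E_{Hε} = {z : (Re z)²/p + (Im z)²/q = 1}` equals the Kepler envelope conic
`{w : |w| + |w − c_H²| = 2β + εR_H²}`, confocal with the Kepler boundary (foci `0` and
`(c_H², 0)`) with semi-major axis `β + εR_H²/2`.  With `β = E/k` this identifies the
envelope curves `E_{H±}` of the Hooke billiard as duals of the Kepler envelopes `E_±`. -/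
theorem hooke_envelope_duality
    (c_H R_H β ε : ℝ) (hcH : 0 < c_H) (hRH : 0 < R_H) (hβ : 0 < β)
    (hε : ε = 1 ∨ ε = -1)
    (p q : ℝ)
    (hp : p = β + (c_H ^ 2 + ε * R_H ^ 2) / 2)
    (hq : q = β + (-c_H ^ 2 + ε * R_H ^ 2) / 2)
    (hqpos : 0 < q) :
    (fun z : ℂ => z ^ 2) '' {z : ℂ | z.re ^ 2 / p + z.im ^ 2 / q = 1}
      = {w : ℂ | ‖w‖ + ‖w - (c_H ^ 2 : ℝ)‖
          = 2 * β + ε * R_H ^ 2} := by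
  have hc2 : c_H ^ 2 = p - q := by rw [hp, hq]; ring
  have hsum : p + q = 2 * β + ε * R_H ^ 2 := by rw [hp, hq]; ring
  have hppos : 0 < p := by nlinarith [sq_nonneg c_H]
  have hpne : p ≠ 0 := ne_of_gt hppos
  have hqne : q ≠ 0 := ne_of_gt hqpos
  ext w
  simp only [Set.mem_image, Set.mem_setOf_eq]
  constructor
  · rintro ⟨z, hz, rfl⟩
    set x := z.re with hx
    set y := z.im with hy
    have key : x ^ 2 * q + y ^ 2 * p = p * q := by
      field_simp at hz; linarith
    have hx2 : x ^ 2 ≤ p := by nlinarith [sq_nonneg x, sq_nonneg y]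
    have hy2 : y ^ 2 ≤ q := by nlinarith [sq_nonneg x, sq_nonneg y]
    have habs : ‖z ^ 2‖ = x ^ 2 + y ^ 2 := by
      rw [norm_pow, Complex.sq_norm, Complex.normSq_apply]; ring
    have h2 : (‖z ^ 2 - ((c_H ^ 2 : ℝ) : ℂ)‖) ^ 2
        = (p + q - (x ^ 2 + y ^ 2)) ^ 2 := by
      rw [Complex.sq_norm, Complex.normSq_apply]
      simp only [Complex.sub_re, Complex.sub_im, Complex.ofReal_re, Complex.ofReal_im,
        pow_two, Complex.mul_re, Complex.mul_im, ← hx, ← hy]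
      linear_combination 4 * key + (c_H ^ 2 + (p - q) - 2 * x ^ 2 + 2 * y ^ 2) * hc2
    have h3 : ‖z ^ 2 - ((c_H ^ 2 : ℝ) : ℂ)‖ = p + q - (x ^ 2 + y ^ 2) := by
      have h0 := norm_nonneg (z ^ 2 - ((c_H ^ 2 : ℝ) : ℂ))
      have h1 : 0 ≤ p + q - (x ^ 2 + y ^ 2) := by linarith
      nlinarith [h2, h0, h1]
    rw [habs, h3]; linarith
  · intro hw
    obtain ⟨z, hz⟩ := IsAlgClosed.exists_pow_nat_eq w (n := 2) (by norm_num)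
    refine ⟨z, ?_, hz⟩
    set x := z.re with hx
    set y := z.im with hy
    have habs : ‖w‖ = x ^ 2 + y ^ 2 := by
      rw [← hz, norm_pow, Complex.sq_norm, Complex.normSq_apply]; ring
    have h3 : ‖w - ((c_H ^ 2 : ℝ) : ℂ)‖ = p + q - (x ^ 2 + y ^ 2) := by
      rw [hsum]; linarith
    have h2 : (‖w - ((c_H ^ 2 : ℝ) : ℂ)‖) ^ 2
        = (p + q - (x ^ 2 + y ^ 2)) ^ 2 := by rw [h3]
    rw [← hz] at h2
    have h4 : (x * x - y * y - c_H ^ 2) ^ 2 + (x * y + y * x) ^ 2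
        = (p + q - (x ^ 2 + y ^ 2)) ^ 2 := by
      rw [← h2, Complex.sq_norm, Complex.normSq_apply]
      simp only [Complex.sub_re, Complex.sub_im, Complex.ofReal_re, Complex.ofReal_im,
        pow_two, Complex.mul_re, Complex.mul_im, ← hx, ← hy]
      ring
    have key : x ^ 2 * q + y ^ 2 * p = p * q := by
      linear_combination (1/4) * h4 - (1/4) * (c_H ^ 2 + (p - q) - 2 * x ^ 2 + 2 * y ^ 2) * hc2
    show x ^ 2 / p + y ^ 2 / q = 1
    field_simp
    linarith
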